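/- Let G be a finite group, Γ a connected simple graph on a finite nonempty vertex set V with v = card V, T a spanning tree of Γ, and x₀ ∈ V a root vertex. Let f be a complex-valued function on G-configurations which is invariant under internal gauge transformations, i.e. f(k • g) = f(g) whenever k(x₀) = 1. Then the sum of f over all configurations equals |G|^(v−1) times the sum of f over the gauge-fixed configurations, i.e. over those configurations g with g(d) = 1 for every dart d whose underlying edge lies in T: Σ_{all configurations g} f(g) = |G|^(v−1) · Σ_{g : g ≡ 1 on T} f(g). -/

import Mathlib

open SimpleGraph

section GaugeAux

variable {V G : Type} [Group G] {Γ T : SimpleGraph V}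

/-- Product of a configuration along a walk in the subgraph `T ≤ Γ`. -/
def gaugeWalkProd (hle : T ≤ Γ) (g : Γ.Dart → G) : ∀ {a b : V}, T.Walk a b → G
  | _, _, SimpleGraph.Walk.nil => 1
  | _, _, SimpleGraph.Walk.cons h p => g ⟨(_, _), hle h⟩ * gaugeWalkProd hle g p

@[simp] lemma gaugeWalkProd_nil (hle : T ≤ Γ) (g : Γ.Dart → G) {a : V} :
    gaugeWalkProd hle g (Walk.nil : T.Walk a a) = 1 := rfl

@[simp] lemma gaugeWalkProd_cons (hle : T ≤ Γ) (g : Γ.Dart → G) {a c b : V}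
    (h : T.Adj a c) (p : T.Walk c b) :
    gaugeWalkProd hle g (Walk.cons h p) = g ⟨(a, c), hle h⟩ * gaugeWalkProd hle g p := rfl

lemma gaugeWalkProd_append (hle : T ≤ Γ) (g : Γ.Dart → G) {a b c : V}
    (p : T.Walk a b) (q : T.Walk b c) :
    gaugeWalkProd hle g (p.append q) = gaugeWalkProd hle g p * gaugeWalkProd hle g q := by
  induction p with
  | nil => simp
  | cons h p ih => simp [ih, mul_assoc]

lemma gaugeWalkProd_gauge (hle : T ≤ Γ) (k : V → G) (g : Γ.Dart → G) {a b : V}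
    (p : T.Walk a b) :
    gaugeWalkProd hle (fun d => k d.fst * g d * (k d.snd)⁻¹) p
      = k a * gaugeWalkProd hle g p * (k b)⁻¹ := by
  induction p with
  | nil => simp
  | cons h p ih =>
      rw [gaugeWalkProd_cons, gaugeWalkProd_cons, ih]
      group

lemma gaugeWalkProd_eq_one (hle : T ≤ Γ) (g : Γ.Dart → G)
    (hg : ∀ d : Γ.Dart, T.Adj d.fst d.snd → g d = 1) {a b : V} (p : T.Walk a b) :
    gaugeWalkProd hle g p = 1 := by
  induction p with
  | nil => rfl
  | cons h p ih => rw [gaugeWalkProd_cons, ih, hg _ h, one_mul]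

/-- The distinguished path between two vertices of a tree. -/
noncomputable def treePath (hT : T.IsTree) (a b : V) : T.Walk a b :=
  (hT.existsUnique_path a b).exists.choose

lemma treePath_isPath (hT : T.IsTree) (a b : V) : (treePath hT a b).IsPath :=
  (hT.existsUnique_path a b).exists.choose_spec

lemma treePath_unique (hT : T.IsTree) {a b : V} (p : T.Walk a b) (hp : p.IsPath) :
    p = treePath hT a b := by
  have := hT.IsAcyclic.path_unique ⟨p, hp⟩ ⟨treePath hT a b, treePath_isPath hT a b⟩
  exact congrArg Subtype.val this

/-- Product of a configuration along the tree path between two vertices. -/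
noncomputable def gaugePathProd (hT : T.IsTree) (hle : T ≤ Γ) (g : Γ.Dart → G) (a b : V) : G :=
  gaugeWalkProd hle g (treePath hT a b)

lemma gaugePathProd_self (hT : T.IsTree) (hle : T ≤ Γ) (g : Γ.Dart → G) (a : V) :
    gaugePathProd hT hle g a a = 1 := by
  have h := treePath_unique hT (Walk.nil : T.Walk a a) Walk.IsPath.nil
  rw [gaugePathProd, ← h, gaugeWalkProd_nil]

lemma gaugePathProd_cons (hT : T.IsTree) (hle : T ≤ Γ) (g : Γ.Dart → G)
    (hg : ∀ d : Γ.Dart, g d.symm = (g d)⁻¹) {a c b : V} (h : T.Adj a c) :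
    gaugePathProd hT hle g a b = g ⟨(a, c), hle h⟩ * gaugePathProd hT hle g c b := by
  classical
  have hsymm : g ⟨(a, c), hle h⟩ = (g ⟨(c, a), hle h.symm⟩)⁻¹ := by
    exact hg ⟨(c, a), hle h.symm⟩
  by_cases hmem : a ∈ (treePath hT c b).support
  · have hsp := treePath_isPath hT c b
    have hedge : ((Walk.cons h.symm Walk.nil : T.Walk c a)).IsPath := by
      refine Walk.IsPath.nil.cons ?_
      simp [h.ne']
    have h1 : (treePath hT c b).takeUntil a hmem = Walk.cons h.symm Walk.nil := by
      have := hT.IsAcyclic.path_unique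
        ⟨(treePath hT c b).takeUntil a hmem, hsp.takeUntil hmem⟩
        ⟨Walk.cons h.symm Walk.nil, hedge⟩
      exact congrArg Subtype.val this
    have h2 : (treePath hT c b).dropUntil a hmem = treePath hT a b :=
      treePath_unique hT _ (hsp.dropUntil hmem)
    have h3 := (treePath hT c b).take_spec hmem
    have : gaugePathProd hT hle g c b
        = g ⟨(c, a), hle h.symm⟩ * gaugePathProd hT hle g a b := by
      rw [gaugePathProd, ← h3, gaugeWalkProd_append, h1, h2, gaugeWalkProd_cons,
        gaugeWalkProd_nil, mul_one, gaugePathProd]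
    rw [this, hsymm]
    group
  · have hpath : (Walk.cons h (treePath hT c b)).IsPath :=
      (treePath_isPath hT c b).cons hmem
    have := treePath_unique hT _ hpath
    rw [gaugePathProd, ← this, gaugeWalkProd_cons, gaugePathProd]

lemma gaugeWalkProd_eq_pathProd (hT : T.IsTree) (hle : T ≤ Γ) (g : Γ.Dart → G)
    (hg : ∀ d : Γ.Dart, g d.symm = (g d)⁻¹) {a b : V} (p : T.Walk a b) :
    gaugeWalkProd hle g p = gaugePathProd hT hle g a b := by
  induction p with
  | nil => rw [gaugeWalkProd_nil, gaugePathProd_self]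
  | cons h p ih => rw [gaugeWalkProd_cons, ih, ← gaugePathProd_cons hT hle g hg h]

lemma gaugePathProd_concat (hT : T.IsTree) (hle : T ≤ Γ) (g : Γ.Dart → G)
    (hg : ∀ d : Γ.Dart, g d.symm = (g d)⁻¹) {x u v : V} (h : T.Adj u v) :
    gaugePathProd hT hle g x v = gaugePathProd hT hle g x u * g ⟨(u, v), hle h⟩ := by
  have key := gaugeWalkProd_eq_pathProd hT hle g hg
    ((treePath hT x u).append (Walk.cons h Walk.nil))
  rw [gaugeWalkProd_append, gaugeWalkProd_cons, gaugeWalkProd_nil, mul_one] at key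
  rw [← key, gaugePathProd]

end GaugeAux

/-- Let `G` be a finite group, `Γ` a connected simple graph on a finite
nonempty vertex set, `T` a spanning tree of `Γ` and `x₀` a root. If `f` is a complex-valued
function on `G`-configurations invariant under internal gauge transformations, then the sum
of `f` over all configurations equals `|G| ^ (card V - 1)` times its sum over the gauge-fixed
configurations (those equal to `1` on all darts whose edges lie in `T`). -/
theorem sum_over_configurations_eq_gauge_fixed
    {G V : Type} [Group G] [Fintype G] [Fintype V] [Nonempty V]
    (Γ T : SimpleGraph V) (hconn : Γ.Connected) (hle : T ≤ Γ) (hT : T.IsTree) (x₀ : V)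
    (f : (Γ.Dart → G) → ℂ)
    (hinv : ∀ g : Γ.Dart → G, (∀ d : Γ.Dart, g d.symm = (g d)⁻¹) →
      ∀ k : V → G, k x₀ = 1 → f (fun d => k d.fst * g d * (k d.snd)⁻¹) = f g) :
    ∑ᶠ g ∈ {g : Γ.Dart → G | ∀ d : Γ.Dart, g d.symm = (g d)⁻¹}, f g =
      (Nat.card G : ℂ) ^ (Fintype.card V - 1) *
        ∑ᶠ g ∈ {g : Γ.Dart → G | (∀ d : Γ.Dart, g d.symm = (g d)⁻¹) ∧
            ∀ d : Γ.Dart, T.Adj d.fst d.snd → g d = 1}, f g := by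
  classical
  letI : DecidableRel Γ.Adj := Classical.decRel _
  -- basic definitions
  set Conf : Set (Γ.Dart → G) := {g : Γ.Dart → G | ∀ d : Γ.Dart, g d.symm = (g d)⁻¹} with hConf
  set GFix : Set (Γ.Dart → G) := {g : Γ.Dart → G | (∀ d : Γ.Dart, g d.symm = (g d)⁻¹) ∧
      ∀ d : Γ.Dart, T.Adj d.fst d.snd → g d = 1} with hGFix
  have hConfFin : Conf.Finite := Set.toFinite _
  have hGFixFin : GFix.Finite := Set.toFinite _
  set sConf : Finset (Γ.Dart → G) := hConfFin.toFinset with hsConf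
  set sGF : Finset (Γ.Dart → G) := hGFixFin.toFinset with hsGF
  set K : Finset (V → G) := Finset.univ.filter (fun k : V → G => k x₀ = 1) with hK
  -- the gauge transformation extracted from a configuration
  set kmap : (Γ.Dart → G) → (V → G) :=
    fun g v => (gaugePathProd hT hle g x₀ v)⁻¹ with hkmap
  set act : (V → G) → (Γ.Dart → G) → (Γ.Dart → G) :=
    fun k g d => k d.fst * g d * (k d.snd)⁻¹ with hact
  set ung : (Γ.Dart → G) → (Γ.Dart → G) :=
    fun g d => (kmap g d.fst)⁻¹ * g d * kmap g d.snd with hung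
  -- rewrite both finsums as finset sums
  rw [finsum_mem_eq_finite_toFinset_sum f hConfFin, finsum_mem_eq_finite_toFinset_sum f hGFixFin]
  -- the key bijection
  have key : ∑ g ∈ sConf, f g = ∑ p ∈ K ×ˢ sGF, f (act p.1 p.2) := by
    refine Finset.sum_nbij' (fun g => (kmap g, ung g)) (fun p => act p.1 p.2) ?_ ?_ ?_ ?_ ?_
    · intro g hg
      rw [hsConf, Set.Finite.mem_toFinset] at hg
      rw [Finset.mem_product]
      constructor
      · rw [hK, Finset.mem_filter]
        refine ⟨Finset.mem_univ _, ?_⟩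
        simp only [hkmap, gaugePathProd_self, inv_one]
      · rw [hsGF, Set.Finite.mem_toFinset, hGFix]
        constructor
        · intro d
          have hgd := hg d
          simp only [hung]
          have h1 : d.symm.fst = d.snd := rfl
          have h2 : d.symm.snd = d.fst := rfl
          rw [h1, h2, hgd]
          group
        · intro d hd
          have hdd : d = ⟨(d.fst, d.snd), hle hd⟩ := by
            apply SimpleGraph.Dart.ext; rfl
          have hcat := gaugePathProd_concat hT hle g hg (x := x₀) hd
          simp only [hung, hkmap, inv_inv]
          rw [hcat, ← hdd]
          group
    · intro p hp
      rw [Finset.mem_product, hK, Finset.mem_filter, hsGF, Set.Finite.mem_toFinset] at hp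
      obtain ⟨⟨-, hk⟩, hg, -⟩ := hp
      rw [hsConf, Set.Finite.mem_toFinset]
      intro d
      simp only [hact]
      have h1 : d.symm.fst = d.snd := rfl
      have h2 : d.symm.snd = d.fst := rfl
      rw [h1, h2, hg d]
      group
    · intro g hg
      funext d
      simp only [hact, hung]
      group
    · intro p hp
      rw [Finset.mem_product, hK, Finset.mem_filter, hsGF, Set.Finite.mem_toFinset] at hp
      obtain ⟨⟨-, hk⟩, hg, htriv⟩ := hp
      have hkm : kmap (act p.1 p.2) = p.1 := by
        funext v
        simp only [hkmap, gaugePathProd]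
        have := gaugeWalkProd_gauge hle p.1 p.2 (treePath hT x₀ v)
        simp only [hact]
        rw [this, gaugeWalkProd_eq_one hle p.2 htriv, hk]
        group
      have hun : ung (act p.1 p.2) = p.2 := by
        funext d
        simp only [hung, hkm]
        simp only [hact]
        group
      exact Prod.ext hkm hun
    · intro g hg
      have : act (kmap g) (ung g) = g := by
        funext d
        simp only [hact, hung]
        group
      rw [this]
  rw [key]
  -- apply gauge invariance inside the sum
  have key2 : ∑ p ∈ K ×ˢ sGF, f (act p.1 p.2) = ∑ p ∈ K ×ˢ sGF, f p.2 := by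
    refine Finset.sum_congr rfl ?_
    intro p hp
    rw [Finset.mem_product, hK, Finset.mem_filter, hsGF, Set.Finite.mem_toFinset] at hp
    obtain ⟨⟨-, hk⟩, hg, -⟩ := hp
    exact hinv p.2 hg p.1 hk
  have key3 : ∑ x ∈ K, ∑ y ∈ sGF, f (x, y).2 = ∑ _x ∈ K, ∑ y ∈ sGF, f y := rfl
  rw [key2, Finset.sum_product, key3, Finset.sum_const]
  -- it remains to count K
  have hcardK : K.card = Fintype.card G ^ (Fintype.card V - 1) := by
    have e : {k : V → G // k x₀ = 1} ≃ ({v : V // v ≠ x₀} → G) :=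
      { toFun := fun k v => k.1 v.1
        invFun := fun h => ⟨fun v => if hv : v = x₀ then 1 else h ⟨v, hv⟩, by simp⟩
        left_inv := by
          intro k
          apply Subtype.ext
          funext v
          by_cases hv : v = x₀
          · subst hv; simp [k.2]
          · simp [hv]
        right_inv := by
          intro h
          funext v
          simp [v.2] }
    have h1 : Fintype.card {k : V → G // k x₀ = 1} = K.card := by
      rw [Fintype.card_subtype]
    have h2 : Fintype.card {v : V // v ≠ x₀} = Fintype.card V - 1 := by
      rw [Fintype.card_subtype_compl, Fintype.card_subtype_eq]
    rw [← h1, Fintype.card_congr e, Fintype.card_fun, h2]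
  rw [hcardK, nsmul_eq_mul, Nat.cast_pow, Nat.card_eq_fintype_card]
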